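/- Let s > −1 and let μ be the measure dμ(x) = x^s dx on [0,1]. Then the monic recurrence coefficients of μ are given in closed form by α_n = (1/2)(1 + s²/((s + 2n)(2 + s + 2n))) for all n ≥ 0, and √β_{n+1} = ((1+n)(1+s+n)/((s + 2 + 2n)(3 + s + 2n))) · √((3 + s + 2n)/(1 + s + 2n)) for all n ≥ 0. (These are the chain frequencies ω_n = ω_c α_n and hoppings t_n = ω_c √β_{n+1} for the spin-boson model with power-law spectral density J(ω) = 2πα ω_c^{1−s} ω^s with hard cutoff at ω_c.) -/

import Mathlib

open MeasureTheory Polynomial Filter Finset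
open scoped NNReal ENNReal

noncomputable section

/-- The inner product on real polynomials induced by a measure `μ` on `ℝ`:
`⟨p, q⟩ = ∫ p(x) q(x) dμ(x)`. -/
def pinner (μ : Measure ℝ) (p q : Polynomial ℝ) : ℝ :=
  ∫ x, p.eval x * q.eval x ∂μ

/-- `μ` has finite moments of all orders: `∫ |x|^r dμ(x) < ∞` for every `r : ℕ`. -/
def HasFiniteMoments (μ : Measure ℝ) : Prop :=
  ∀ r : ℕ, Integrable (fun x => |x| ^ r) μ

/-- `μ` has infinite support: it is not concentrated on any finite set. -/
def HasInfiniteSupport (μ : Measure ℝ) : Prop :=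
  ∀ s : Set ℝ, s.Finite → μ sᶜ ≠ 0

/-- `P` is the sequence of monic orthogonal polynomials for `μ`: each `P n` is monic of
degree `n`, and distinct ones are orthogonal w.r.t. the inner product induced by `μ`. -/
def IsMonicOrthogonal (μ : Measure ℝ) (P : ℕ → Polynomial ℝ) : Prop :=
  (∀ n, (P n).Monic) ∧ (∀ n, (P n).natDegree = n) ∧
    ∀ n m, n ≠ m → pinner μ (P n) (P m) = 0

/-- The recurrence coefficient `α_k = ⟨x π_k, π_k⟩ / ⟨π_k, π_k⟩`. -/
def alphaCoeff (μ : Measure ℝ) (P : ℕ → Polynomial ℝ) (k : ℕ) : ℝ :=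
  pinner μ (X * P k) (P k) / pinner μ (P k) (P k)

/-- The recurrence coefficient `β_k = ⟨π_k, π_k⟩ / ⟨π_{k-1}, π_{k-1}⟩` (for `k ≥ 1`). -/
def betaCoeff (μ : Measure ℝ) (P : ℕ → Polynomial ℝ) (k : ℕ) : ℝ :=
  pinner μ (P k) (P k) / pinner μ (P (k - 1)) (P (k - 1))

/-- The orthonormal polynomials `p̃_n = π_n / ‖π_n‖`. -/
def ptil (μ : Measure ℝ) (P : ℕ → Polynomial ℝ) (n : ℕ) : Polynomial ℝ :=
  (Real.sqrt (pinner μ (P n) (P n)))⁻¹ • P n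

/-- `κ_n`: the leading coefficient of the orthonormal polynomial `p̃_n`. -/
def kappaC (μ : Measure ℝ) (P : ℕ → Polynomial ℝ) (n : ℕ) : ℝ :=
  (ptil μ P n).coeff n

/-- `κ'_n`: the coefficient of `x^(n-1)` in `p̃_n`, with `κ'_0 = 0`. -/
def kappaC' (μ : Measure ℝ) (P : ℕ → Polynomial ℝ) (n : ℕ) : ℝ :=
  if n = 0 then 0 else (ptil μ P n).coeff (n - 1)

/-- The measure `dμ(x) = x^s dx` on `[0, 1]` (the shifted-Jacobi weight). -/
def jacobiMeasure (s : ℝ) : Measure ℝ :=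
  (volume.restrict (Set.Icc (0 : ℝ) 1)).withDensity (fun x => ENNReal.ofReal (x ^ s))

lemma alt_sum_choose_real (n : ℕ) (hn : n ≠ 0) :
    ∑ k ∈ range (n+1), (-1:ℝ)^k * (n.choose k : ℝ) = 0 := by
  have := Int.alternating_sum_range_choose_of_ne (n := n) hn
  have := congrArg (fun z : ℤ => (z : ℝ)) this
  push_cast at this
  simpa using this

lemma findiff_zero : ∀ j : ℕ, ∀ n : ℕ, j < n → ∀ t : ℕ → ℝ,
    ∑ k ∈ range (n+1), (-1:ℝ)^k * (n.choose k : ℝ) * ∏ i ∈ range j, (t i + k) = 0 := by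
  intro j
  induction j with
  | zero =>
    intro n hn t
    simpa using alt_sum_choose_real n (by omega)
  | succ j ih =>
    intro n hn t
    obtain ⟨m, rfl⟩ : ∃ m, n = m + 1 := ⟨n - 1, by omega⟩
    have key : ∀ k ∈ range (m+2),
        (-1:ℝ)^k * ((m+1).choose k : ℝ) * ∏ i ∈ range (j+1), (t i + k)
        = t j * ((-1:ℝ)^k * ((m+1).choose k : ℝ) * ∏ i ∈ range j, (t i + k))
          + (-1:ℝ)^k * ((m+1).choose k : ℝ) * k * ∏ i ∈ range j, (t i + k) := by
      intro k _
      rw [prod_range_succ]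
      ring
    rw [Finset.sum_congr rfl key, Finset.sum_add_distrib, ← Finset.mul_sum,
      ih (m+1) (by omega) t, mul_zero, zero_add]
    -- second sum: reindex
    rw [Finset.sum_range_succ']
    simp only [Nat.cast_zero, mul_zero, zero_mul, add_zero]
    have key2 : ∀ k ∈ range (m+1),
        (-1:ℝ)^(k+1) * ((m+1).choose (k+1) : ℝ) * (k+1 : ℕ) * ∏ i ∈ range j, (t i + (k+1:ℕ))
        = (-(m+1):ℝ) * ((-1:ℝ)^k * ((m).choose k : ℝ) * ∏ i ∈ range j, ((t i + 1) + k)) := by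
      intro k _
      have h : ((m+1) * m.choose k : ℝ) = ((m+1).choose (k+1) : ℝ) * (k+1) := by
        exact_mod_cast congrArg (Nat.cast : ℕ → ℝ) (Nat.add_one_mul_choose_eq m k)
      have hprod : ∏ i ∈ range j, (t i + (k+1:ℕ)) = ∏ i ∈ range j, ((t i + 1) + k) := by
        apply Finset.prod_congr rfl; intro i _; push_cast; ring
      rw [hprod, pow_succ]
      push_cast
      linear_combination ((-1:ℝ)^k * ∏ i ∈ range j, ((t i + 1) + k)) * h
    rw [Finset.sum_congr rfl key2, ← Finset.mul_sum, ih m (by omega) (fun i => t i + 1),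
      mul_zero]

lemma partial_fraction : ∀ n : ℕ, ∀ b : ℝ, (∀ j ∈ range (n+1), b + j ≠ 0) →
    ∑ k ∈ range (n+1), (-1:ℝ)^k * (n.choose k : ℝ) / (b + k)
      = (n.factorial : ℝ) / ∏ j ∈ range (n+1), (b + j) := by
  intro n
  induction n with
  | zero => intro b hb; simp
  | succ n ih =>
    intro b hb
    have hb0 : b ≠ 0 := by simpa using hb 0 (by simp)
    have hbj : ∀ j ∈ range (n+1), b + j ≠ 0 := fun j hj => hb j (by simp at hj ⊢; omega)
    have hbj1 : ∀ j ∈ range (n+1), (b+1) + j ≠ 0 := by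
      intro j hj
      have h := hb (j+1) (by simp at hj ⊢; omega)
      intro hc; apply h; push_cast; linarith
    set F : ℕ → ℝ := fun k => (-1:ℝ)^k * ((n+1).choose k : ℝ) / (b + k) with hF
    set G : ℕ → ℝ := fun k => (-1:ℝ)^k * (n.choose k : ℝ) / (b + k) with hG
    set G' : ℕ → ℝ := fun k => (-1:ℝ)^k * (n.choose (k+1) : ℝ) / (b + (k+1:ℕ)) with hG'
    set H : ℕ → ℝ := fun k => (-1:ℝ)^k * (n.choose k : ℝ) / ((b+1) + k) with hH
    have h1 : ∑ k ∈ range (n+2), F k = (∑ k ∈ range (n+1), F (k+1)) + F 0 :=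
      Finset.sum_range_succ' F (n+1)
    have h2 : ∑ k ∈ range (n+1), F (k+1)
        = (∑ k ∈ range (n+1), -(G' k)) - ∑ k ∈ range (n+1), H k := by
      rw [← Finset.sum_sub_distrib]
      apply Finset.sum_congr rfl
      intro k hk
      simp only [hF, hG', hH]
      have hc : ((n+1).choose (k+1) : ℝ) = (n.choose k : ℝ) + (n.choose (k+1) : ℝ) := by
        exact_mod_cast congrArg (Nat.cast : ℕ → ℝ) (Nat.choose_succ_succ n k)
      have hne2 : (b+1) + (k:ℝ) ≠ 0 := hbj1 k hk
      have hne1 : b + ((k:ℝ)+1) ≠ 0 := by intro hc2; apply hne2; linarith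
      push_cast
      rw [hc]
      field_simp [hne1, hne2]
      ring
    have h3 : ∑ k ∈ range (n+1), G' k = ∑ k ∈ range n, G' k := by
      rw [Finset.sum_range_succ, hG']
      simp [Nat.choose_succ_self]
    have h4 : ∑ k ∈ range (n+1), G k = (∑ k ∈ range n, -(G' k)) + G 0 := by
      rw [Finset.sum_range_succ' G n]
      congr 1
      apply Finset.sum_congr rfl
      intro k _
      simp only [hG, hG']
      push_cast
      ring
    have h5 : ∑ k ∈ range (n+1), H k
        = ∑ k ∈ range (n+1), (-1:ℝ)^k * (n.choose k : ℝ) / ((b+1) + k) := rfl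
    have hsplit : ∑ k ∈ range (n+2), F k
        = (∑ k ∈ range (n+1), G k) - ∑ k ∈ range (n+1), H k := by
      have hF0 : F 0 = G 0 := by simp [hF, hG]
      rw [h1, h2, h4, Finset.sum_neg_distrib, Finset.sum_neg_distrib, h3, hF0]
      ring
    rw [hsplit, ih b hbj, ih (b+1) hbj1]
    have hX : (∏ j ∈ range (n+1), (b + j)) ≠ 0 := Finset.prod_ne_zero_iff.mpr hbj
    have hY : (∏ j ∈ range (n+1), ((b+1) + j)) ≠ 0 := Finset.prod_ne_zero_iff.mpr hbj1
    have hbn : b + ((n:ℝ)+1) ≠ 0 := by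
      have := hb (n+1) (by simp)
      intro hc; apply this; push_cast; linarith
    have hZ1 : ∏ j ∈ range (n+2), (b + j)
        = (∏ j ∈ range (n+1), (b + j)) * (b + ((n:ℝ)+1)) := by
      rw [Finset.prod_range_succ]; push_cast; ring
    have hrel : (∏ j ∈ range (n+1), (b + j)) * (b + ((n:ℝ)+1))
        = b * ∏ j ∈ range (n+1), ((b+1) + j) := by
      rw [← hZ1, Finset.prod_range_succ' (fun j => (b + j)) (n+1)]
      simp only [Nat.cast_zero, add_zero]
      rw [mul_comm]
      congr 1
      apply Finset.prod_congr rfl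
      intro j _; push_cast; ring
    rw [hZ1]
    set X := ∏ j ∈ range (n+1), (b + (j:ℝ))
    set Y := ∏ j ∈ range (n+1), ((b+1) + (j:ℝ))
    rw [div_sub_div _ _ hX hY, div_eq_div_iff (mul_ne_zero hX hY) (mul_ne_zero hX hbn)]
    push_cast [Nat.factorial_succ]
    linear_combination (-(n.factorial:ℝ) * X) * hrel

lemma Lval (s : ℝ) (hs : -1 < s) (n m : ℕ) :
    ∑ k ∈ range (n+1), (-1:ℝ)^(n+k) * (n.choose k : ℝ)
        * (∏ i ∈ range n, (s+(k:ℝ)+1+i)) / (s+k+m+1)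
    = (∏ i ∈ range n, ((n:ℝ)-m-1-i))
        * ((-1:ℝ)^n * (n.factorial : ℝ) / ∏ j ∈ range (n+1), (s+m+1+j)) := by
  set V : ℕ → ℝ := fun j => ∑ k ∈ range (n+1), (-1:ℝ)^(n+k) * (n.choose k : ℝ)
        * (∏ i ∈ range j, (s+(n:ℝ)+k-i)) / (s+k+m+1) with hV
  have hden : ∀ k : ℕ, s+(k:ℝ)+m+1 ≠ 0 := by
    intro k
    have : (0:ℝ) ≤ k := Nat.cast_nonneg k
    have : (0:ℝ) ≤ m := Nat.cast_nonneg m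
    nlinarith [hs]
  have hstep : ∀ j, j < n → V (j+1) = ((n:ℝ)-m-1-j) * V j := by
    intro j hj
    have e1 : ∀ k ∈ range (n+1),
        (-1:ℝ)^(n+k) * (n.choose k : ℝ) * (∏ i ∈ range (j+1), (s+(n:ℝ)+k-i)) / (s+k+m+1)
        = (-1:ℝ)^n * ((-1:ℝ)^k * (n.choose k : ℝ) * ∏ i ∈ range j, ((s+(n:ℝ)-i) + k))
          + ((n:ℝ)-m-1-j) *
            ((-1:ℝ)^(n+k) * (n.choose k : ℝ) * (∏ i ∈ range j, (s+(n:ℝ)+k-i)) / (s+k+m+1)) := by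
      intro k _
      rw [prod_range_succ]
      have hd := hden k
      have hpr : ∏ i ∈ range j, (s+(n:ℝ)+k-i) = ∏ i ∈ range j, ((s+(n:ℝ)-i) + k) := by
        apply Finset.prod_congr rfl; intro i _; ring
      rw [hpr]
      field_simp
      ring
    rw [hV]
    simp only []
    rw [Finset.sum_congr rfl e1, Finset.sum_add_distrib, ← Finset.mul_sum, ← Finset.mul_sum,
      findiff_zero j n hj (fun i => s+(n:ℝ)-i), mul_zero, zero_add]
  have hVj : ∀ j, j ≤ n → V j = (∏ i ∈ range j, ((n:ℝ)-m-1-i)) * V 0 := by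
    intro j
    induction j with
    | zero => intro _; simp
    | succ j ih =>
      intro hj
      rw [hstep j (by omega), ih (by omega), prod_range_succ]
      ring
  have hV0 : V 0 = (-1:ℝ)^n * ((n.factorial : ℝ) / ∏ j ∈ range (n+1), (s+m+1+j)) := by
    rw [hV]
    simp only [prod_range_zero, mul_one]
    have : ∀ k ∈ range (n+1), (-1:ℝ)^(n+k) * (n.choose k : ℝ) / (s+(k:ℝ)+m+1)
        = (-1:ℝ)^n * ((-1:ℝ)^k * (n.choose k : ℝ) / ((s+(m:ℝ)+1) + k)) := by
      intro k _
      rw [pow_add]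
      have : s+(k:ℝ)+m+1 = (s+(m:ℝ)+1) + k := by ring
      rw [this]
      ring
    rw [Finset.sum_congr rfl this, ← Finset.mul_sum,
      partial_fraction n (s+(m:ℝ)+1) (fun j hj => by
        have h1 : (0:ℝ) ≤ j := Nat.cast_nonneg j
        have h2 : (0:ℝ) ≤ m := Nat.cast_nonneg m
        nlinarith [hs])]
  have hfin : ∑ k ∈ range (n+1), (-1:ℝ)^(n+k) * (n.choose k : ℝ)
        * (∏ i ∈ range n, (s+(k:ℝ)+1+i)) / (s+k+m+1) = V n := by
    rw [hV]
    apply Finset.sum_congr rfl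
    intro k _
    congr 1
    congr 1
    rw [← Finset.prod_range_reflect]
    apply Finset.prod_congr rfl
    intro i hi
    simp only [mem_range] at hi
    have hc : ((n - 1 - i : ℕ) : ℝ) = (n:ℝ) - 1 - i := by
      rw [Nat.sub_sub, Nat.cast_sub (by omega : 1 + i ≤ n)]
      push_cast; ring
    rw [hc]; ring
  rw [hfin, hVj n le_rfl, hV0]
  ring

variable {s : ℝ}

lemma dens_meas : Measurable (fun x : ℝ => Real.toNNReal (x ^ s)) := by
  have h : Measurable (fun x : ℝ => x ^ s) := by fun_prop
  exact h.real_toNNReal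

lemma jacobi_eq : jacobiMeasure s
    = (volume.restrict (Set.Ioc (0:ℝ) 1)).withDensity (fun x => ENNReal.ofReal (x ^ s)) := by
  rw [jacobiMeasure, Measure.restrict_congr_set (MeasureTheory.Ioc_ae_eq_Icc)]

lemma integrable_rpow_Ioc (hs : -1 < s) : IntegrableOn (fun x : ℝ => x ^ s) (Set.Ioc 0 1) volume := by
  have := intervalIntegral.intervalIntegrable_rpow' (a := 0) (b := 1) hs
  rwa [intervalIntegrable_iff_integrableOn_Ioc_of_le (by norm_num : (0:ℝ) ≤ 1)] at this

lemma integrable_eval (hs : -1 < s) (p : Polynomial ℝ) :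
    Integrable (fun x => p.eval x) (jacobiMeasure s) := by
  rw [jacobi_eq]
  have h1 : (fun x : ℝ => ENNReal.ofReal (x ^ s))
      = fun x : ℝ => ((Real.toNNReal (x ^ s) : ℝ≥0) : ℝ≥0∞) := by
    funext x; simp [ENNReal.ofReal]
  rw [h1, integrable_withDensity_iff_integrable_smul dens_meas]
  obtain ⟨C, hC⟩ := (isCompact_Icc (a := (0:ℝ)) (b := 1)).exists_bound_of_continuousOn
    (p.continuous_aeval.continuousOn)
  have heq : (fun x : ℝ => (Real.toNNReal (x ^ s) : ℝ) • p.eval x)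
      =ᵐ[volume.restrict (Set.Ioc (0:ℝ) 1)] (fun x => p.eval x * x ^ s) := by
    rw [Filter.eventuallyEq_iff_exists_mem]
    refine ⟨Set.Ioc 0 1, ?_, ?_⟩
    · exact self_mem_ae_restrict measurableSet_Ioc
    · intro x hx
      have hx0 : (0:ℝ) ≤ x ^ s := Real.rpow_nonneg hx.1.le s
      simp [NNReal.smul_def, Real.coe_toNNReal _ hx0]
      ring
  refine (Integrable.congr ?_ heq.symm)
  apply Integrable.bdd_mul (c := C) (integrable_rpow_Ioc hs)
  · exact (p.continuous_aeval.aestronglyMeasurable)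
  · rw [Filter.eventually_iff_exists_mem]
    refine ⟨Set.Ioc 0 1, self_mem_ae_restrict measurableSet_Ioc, fun x hx => ?_⟩
    simpa using hC x (Set.mem_Icc_of_Ioc hx)

lemma integral_jacobi_rpowmul (g : ℝ → ℝ) :
    ∫ x, g x ∂(jacobiMeasure s) = ∫ x in Set.Ioc (0:ℝ) 1, (x ^ s) * g x := by
  rw [jacobi_eq]
  have h1 : (fun x : ℝ => ENNReal.ofReal (x ^ s))
      = fun x : ℝ => ((Real.toNNReal (x ^ s) : ℝ≥0) : ℝ≥0∞) := by
    funext x; simp [ENNReal.ofReal]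
  rw [h1, integral_withDensity_eq_integral_smul dens_meas]
  apply integral_congr_ae
  rw [Filter.eventuallyEq_iff_exists_mem]
  refine ⟨Set.Ioc 0 1, self_mem_ae_restrict measurableSet_Ioc, fun x hx => ?_⟩
  have hx0 : (0:ℝ) ≤ x ^ s := Real.rpow_nonneg hx.1.le s
  simp [NNReal.smul_def, Real.coe_toNNReal _ hx0]

lemma moment (hs : -1 < s) (r : ℕ) :
    ∫ x, (Polynomial.X ^ r : Polynomial ℝ).eval x ∂(jacobiMeasure s) = 1 / (s + r + 1) := by
  rw [integral_jacobi_rpowmul]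
  have h1 : ∀ x ∈ Set.Ioc (0:ℝ) 1, x ^ s * (Polynomial.X ^ r : Polynomial ℝ).eval x
      = x ^ (s + r) := by
    intro x hx
    rw [Polynomial.eval_pow, Polynomial.eval_X, ← Real.rpow_natCast x r,
      ← Real.rpow_add hx.1]
  rw [setIntegral_congr_fun measurableSet_Ioc h1]
  have h2 : ∫ x in Set.Ioc (0:ℝ) 1, x ^ (s + r) = ∫ x in (0:ℝ)..1, x ^ (s + r) := by
    rw [intervalIntegral.integral_of_le (by norm_num : (0:ℝ) ≤ 1)]
  have hr : -1 < s + r := by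
    have : (0:ℝ) ≤ r := Nat.cast_nonneg r
    linarith [hs]
  rw [h2, integral_rpow (Or.inl hr)]
  rw [Real.one_rpow, Real.zero_rpow (by linarith : s + (r:ℝ) + 1 ≠ 0)]
  ring

variable {s : ℝ}

/-- the integral functional -/
def LL (s : ℝ) (p : Polynomial ℝ) : ℝ := ∫ x, p.eval x ∂(jacobiMeasure s)

lemma pinner_eq_LL (p q : Polynomial ℝ) : pinner (jacobiMeasure s) p q = LL s (p * q) := by
  simp [pinner, LL, Polynomial.eval_mul]

lemma LL_monomial (hs : -1 < s) (a : ℝ) (k : ℕ) :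
    LL s (Polynomial.C a * Polynomial.X ^ k) = a / (s + k + 1) := by
  have : (fun x => (Polynomial.C a * Polynomial.X ^ k : Polynomial ℝ).eval x)
      = fun x => a * (Polynomial.X ^ k : Polynomial ℝ).eval x := by
    funext x; simp
  rw [LL, this, integral_const_mul, moment hs k]
  ring

/-- the raw (non-monic) Jacobi polynomial -/
def qraw (s : ℝ) (n : ℕ) : Polynomial ℝ :=
  ∑ k ∈ range (n+1),
    Polynomial.C ((-1:ℝ)^(n+k) * (n.choose k : ℝ) * ∏ i ∈ range n, (s+(k:ℝ)+1+i))
      * Polynomial.X ^ k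

def cc (s : ℝ) (n : ℕ) : ℝ := ∏ i ∈ range n, (s+(n:ℝ)+1+i)

def QQ (s : ℝ) (n : ℕ) : Polynomial ℝ := Polynomial.C (cc s n)⁻¹ * qraw s n

lemma cc_pos (hs : -1 < s) (n : ℕ) : 0 < cc s n := by
  apply Finset.prod_pos
  intro i hi
  have h1 : (0:ℝ) ≤ n := Nat.cast_nonneg n
  have h2 : (0:ℝ) ≤ i := Nat.cast_nonneg i
  nlinarith

lemma qraw_coeff (n k : ℕ) (hk : k ≤ n) :
    (qraw s n).coeff k = (-1:ℝ)^(n+k) * (n.choose k : ℝ) * ∏ i ∈ range n, (s+(k:ℝ)+1+i) := by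
  rw [qraw, Polynomial.finset_sum_coeff]
  rw [Finset.sum_eq_single k]
  · rw [Polynomial.coeff_C_mul, Polynomial.coeff_X_pow]
    simp
  · intro b _ hb
    rw [Polynomial.coeff_C_mul, Polynomial.coeff_X_pow]
    simp [Ne.symm hb]
  · intro h
    exact absurd (Finset.mem_range.mpr (by omega)) h

lemma qraw_coeff_gt (n k : ℕ) (hk : n < k) : (qraw s n).coeff k = 0 := by
  rw [qraw, Polynomial.finset_sum_coeff]
  apply Finset.sum_eq_zero
  intro b hb
  simp only [Finset.mem_range] at hb
  rw [Polynomial.coeff_C_mul, Polynomial.coeff_X_pow, if_neg (by omega : ¬ k = b), mul_zero]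

lemma qraw_coeff_top (n : ℕ) : (qraw s n).coeff n = cc s n := by
  rw [qraw_coeff n n le_rfl]
  have h1 : (-1:ℝ)^(n+n) = 1 := by
    rw [← two_mul n, pow_mul]; norm_num
  rw [h1, Nat.choose_self, cc]
  push_cast
  rw [one_mul, one_mul]

lemma qraw_natDegree (hs : -1 < s) (n : ℕ) : (qraw s n).natDegree = n := by
  have hne : (qraw s n).coeff n ≠ 0 := by
    rw [qraw_coeff_top]; exact (cc_pos hs n).ne'
  have hle : (qraw s n).natDegree ≤ n :=
    Polynomial.natDegree_le_iff_coeff_eq_zero.mpr (fun N hN => qraw_coeff_gt n N hN)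
  exact le_antisymm hle (Polynomial.le_natDegree_of_ne_zero hne)

lemma QQ_monic (hs : -1 < s) (n : ℕ) : (QQ s n).Monic := by
  have h0 : (cc s n)⁻¹ ≠ 0 := inv_ne_zero (cc_pos hs n).ne'
  rw [Polynomial.Monic, QQ, Polynomial.leadingCoeff,
    Polynomial.natDegree_C_mul h0, qraw_natDegree hs n,
    Polynomial.coeff_C_mul, qraw_coeff_top]
  exact inv_mul_cancel₀ (cc_pos hs n).ne'

lemma QQ_natDegree (hs : -1 < s) (n : ℕ) : (QQ s n).natDegree = n := by
  have h0 : (cc s n)⁻¹ ≠ 0 := inv_ne_zero (cc_pos hs n).ne'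
  rw [QQ, Polynomial.natDegree_C_mul h0, qraw_natDegree hs n]

/-- the value of `L (qraw n * X^m)` -/
def Wv (s : ℝ) (n m : ℕ) : ℝ :=
  (∏ i ∈ range n, ((n:ℝ)-m-1-i))
    * ((-1:ℝ)^n * (n.factorial : ℝ) / ∏ j ∈ range (n+1), (s+m+1+j))

lemma LL_qraw_mul (hs : -1 < s) (n m : ℕ) :
    LL s (qraw s n * Polynomial.X ^ m) = Wv s n m := by
  rw [qraw, Finset.sum_mul]
  have : ∀ k ∈ range (n+1),
      (Polynomial.C ((-1:ℝ)^(n+k) * (n.choose k : ℝ) * ∏ i ∈ range n, (s+(k:ℝ)+1+i))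
        * Polynomial.X ^ k) * Polynomial.X ^ m
      = Polynomial.C ((-1:ℝ)^(n+k) * (n.choose k : ℝ) * ∏ i ∈ range n, (s+(k:ℝ)+1+i))
        * Polynomial.X ^ (k+m) := by
    intro k _; rw [mul_assoc, ← pow_add]
  rw [Finset.sum_congr rfl this]
  have hint : LL s (∑ k ∈ range (n+1),
      Polynomial.C ((-1:ℝ)^(n+k) * (n.choose k : ℝ) * ∏ i ∈ range n, (s+(k:ℝ)+1+i))
        * Polynomial.X ^ (k+m))
      = ∑ k ∈ range (n+1), LL s (Polynomial.C ((-1:ℝ)^(n+k) * (n.choose k : ℝ)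
          * ∏ i ∈ range n, (s+(k:ℝ)+1+i)) * Polynomial.X ^ (k+m)) := by
    rw [LL]
    have heval : (fun x => (∑ k ∈ range (n+1),
        Polynomial.C ((-1:ℝ)^(n+k) * (n.choose k : ℝ) * ∏ i ∈ range n, (s+(k:ℝ)+1+i))
          * Polynomial.X ^ (k+m) : Polynomial ℝ).eval x)
        = fun x => ∑ k ∈ range (n+1), ((Polynomial.C ((-1:ℝ)^(n+k) * (n.choose k : ℝ)
            * ∏ i ∈ range n, (s+(k:ℝ)+1+i)) * Polynomial.X ^ (k+m) : Polynomial ℝ).eval x) := by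
      funext x; rw [Polynomial.eval_finset_sum]
    rw [heval, integral_finset_sum]
    · rfl
    · intro k _
      exact integrable_eval hs _
  rw [hint]
  have : ∀ k ∈ range (n+1), LL s (Polynomial.C ((-1:ℝ)^(n+k) * (n.choose k : ℝ)
          * ∏ i ∈ range n, (s+(k:ℝ)+1+i)) * Polynomial.X ^ (k+m))
      = (-1:ℝ)^(n+k) * (n.choose k : ℝ) * (∏ i ∈ range n, (s+(k:ℝ)+1+i)) / (s+k+m+1) := by
    intro k _
    rw [LL_monomial hs]
    push_cast
    rw [show s + ((k:ℝ) + (m:ℝ)) + 1 = s + (k:ℝ) + (m:ℝ) + 1 by ring]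
  rw [Finset.sum_congr rfl this, Lval s hs n m, Wv]

variable {s : ℝ}

lemma LL_add (hs : -1 < s) (p q : Polynomial ℝ) : LL s (p + q) = LL s p + LL s q := by
  rw [LL, LL, LL, ← integral_add (integrable_eval hs p) (integrable_eval hs q)]
  apply integral_congr_ae
  filter_upwards with x
  simp

lemma LL_Cmul (hs : -1 < s) (a : ℝ) (p : Polynomial ℝ) :
    LL s (Polynomial.C a * p) = a * LL s p := by
  rw [LL, LL]
  have : (fun x => (Polynomial.C a * p).eval x) = fun x => a * p.eval x := by
    funext x; simp
  rw [this, integral_const_mul]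

lemma LL_sum (hs : -1 < s) {ι : Type*} (t : Finset ι) (f : ι → Polynomial ℝ) :
    LL s (∑ i ∈ t, f i) = ∑ i ∈ t, LL s (f i) := by
  classical
  induction t using Finset.induction with
  | empty => simp [LL]
  | insert _ _ hni ih =>
    rw [Finset.sum_insert hni, Finset.sum_insert hni, LL_add hs, ih]

lemma pinner_comm (μ : Measure ℝ) (p q : Polynomial ℝ) : pinner μ p q = pinner μ q p := by
  unfold pinner
  congr 1
  funext x
  ring

lemma Wv_zero (n m : ℕ) (h : m < n) : Wv s n m = 0 := by
  rw [Wv]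
  have : ((n:ℝ)-m-1-((n-m-1:ℕ):ℝ)) = 0 := by
    rw [Nat.cast_sub (by omega : 1 ≤ n - m), Nat.cast_sub (by omega : m ≤ n)]
    push_cast; ring
  rw [Finset.prod_eq_zero (Finset.mem_range.mpr (by omega : n-m-1 < n)) this, zero_mul]

lemma pinner_QQ_lowdeg (hs : -1 < s) (n : ℕ) (r : Polynomial ℝ) (hrn : r.natDegree < n) :
    pinner (jacobiMeasure s) (QQ s n) r = 0 := by
  rw [pinner_eq_LL, QQ, mul_assoc, LL_Cmul hs]
  have hr : qraw s n * r = ∑ m ∈ range n, Polynomial.C (r.coeff m) * (qraw s n * Polynomial.X ^ m) := by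
    conv_lhs => rw [r.as_sum_range' n hrn]
    rw [Finset.mul_sum]
    apply Finset.sum_congr rfl
    intro m _
    rw [← Polynomial.C_mul_X_pow_eq_monomial]
    ring
  rw [hr, LL_sum hs]
  have : ∀ m ∈ range n, LL s (Polynomial.C (r.coeff m) * (qraw s n * Polynomial.X ^ m)) = 0 := by
    intro m hm
    rw [LL_Cmul hs, LL_qraw_mul hs, Wv_zero n m (Finset.mem_range.mp hm), mul_zero]
  rw [Finset.sum_congr rfl this, Finset.sum_const_zero, mul_zero]

lemma pinner_QQ_X (hs : -1 < s) (n m : ℕ) :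
    pinner (jacobiMeasure s) (QQ s n) (Polynomial.X ^ m) = (cc s n)⁻¹ * Wv s n m := by
  rw [pinner_eq_LL, QQ, mul_assoc, LL_Cmul hs, LL_qraw_mul hs]

lemma monic_sub_natDegree_lt (p : Polynomial ℝ) (n : ℕ) (hp : p.Monic)
    (hd : p.natDegree = n) (hn : 1 ≤ n) : (p - Polynomial.X ^ n).natDegree < n := by
  have hle : (p - Polynomial.X ^ n).natDegree ≤ n - 1 := by
    apply Polynomial.natDegree_le_iff_coeff_eq_zero.mpr
    intro N hN
    rw [Polynomial.coeff_sub, Polynomial.coeff_X_pow]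
    rcases eq_or_ne N n with rfl | hne
    · have : p.coeff N = 1 := by
        have := hp
        rw [Polynomial.Monic, Polynomial.leadingCoeff, hd] at this
        simpa using this
      simp [this]
    · have h1 : p.coeff N = 0 := by
        apply Polynomial.coeff_eq_zero_of_natDegree_lt
        rw [hd]; omega
      rw [h1, if_neg hne]; simp
  omega

lemma pinner_add_right (hs : -1 < s) (p q r : Polynomial ℝ) :
    pinner (jacobiMeasure s) p (q + r)
      = pinner (jacobiMeasure s) p q + pinner (jacobiMeasure s) p r := by
  rw [pinner_eq_LL, mul_add, LL_add hs, ← pinner_eq_LL, ← pinner_eq_LL]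

lemma pinner_zero_right (μ : Measure ℝ) (p : Polynomial ℝ) : pinner μ p 0 = 0 := by
  simp [pinner]

lemma QQ_zero (hs : -1 < s) : QQ s 0 = 1 :=
  (Polynomial.Monic.natDegree_eq_zero (QQ_monic hs 0)).mp (QQ_natDegree hs 0)

lemma pinner_QQ_self (hs : -1 < s) (n : ℕ) :
    pinner (jacobiMeasure s) (QQ s n) (QQ s n) = (cc s n)⁻¹ * Wv s n n := by
  have hdec : pinner (jacobiMeasure s) (QQ s n) (QQ s n)
      = pinner (jacobiMeasure s) (QQ s n) (Polynomial.X ^ n)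
        + pinner (jacobiMeasure s) (QQ s n) (QQ s n - Polynomial.X ^ n) := by
    rw [← pinner_add_right hs]
    congr 1
    ring
  rw [hdec, pinner_QQ_X hs]
  rcases Nat.eq_zero_or_pos n with rfl | hn
  · rw [QQ_zero hs]
    norm_num
    rw [pinner_zero_right]
  · rw [pinner_QQ_lowdeg hs n _ (monic_sub_natDegree_lt _ n (QQ_monic hs n) (QQ_natDegree hs n) hn),
      add_zero]

lemma pinner_Cmul_right (hs : -1 < s) (a : ℝ) (p q : Polynomial ℝ) :
    pinner (jacobiMeasure s) p (Polynomial.C a * q) = a * pinner (jacobiMeasure s) p q := by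
  rw [pinner_eq_LL, show p * (Polynomial.C a * q) = Polynomial.C a * (p * q) by ring,
    LL_Cmul hs, ← pinner_eq_LL]

lemma pinner_sub_right (hs : -1 < s) (p q r : Polynomial ℝ) :
    pinner (jacobiMeasure s) p (q - r)
      = pinner (jacobiMeasure s) p q - pinner (jacobiMeasure s) p r := by
  have := pinner_add_right hs p (q - r) r
  simp only [sub_add_cancel] at this
  linarith [this]

lemma X_QQ_rem (hs : -1 < s) (n : ℕ) (hn : 1 ≤ n) :
    (Polynomial.X * QQ s n - Polynomial.X ^ (n+1)
      - Polynomial.C ((QQ s n).coeff (n-1)) * Polynomial.X ^ n).natDegree < n := by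
  have hle : (Polynomial.X * QQ s n - Polynomial.X ^ (n+1)
      - Polynomial.C ((QQ s n).coeff (n-1)) * Polynomial.X ^ n).natDegree ≤ n - 1 := by
    apply Polynomial.natDegree_le_iff_coeff_eq_zero.mpr
    intro N hN
    obtain ⟨j, rfl⟩ : ∃ j, N = j + 1 := ⟨N - 1, by omega⟩
    simp only [Polynomial.coeff_sub, Polynomial.coeff_X_mul, Polynomial.coeff_X_pow,
      Polynomial.coeff_C_mul]
    rcases eq_or_ne j (n-1) with rfl | hne1
    · have hjn : n - 1 + 1 = n := by omega
      rw [hjn, if_neg (by omega : ¬ n = n + 1), if_pos rfl]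
      ring
    · rcases eq_or_ne j n with heq | hne2
      · have h1 : (QQ s n).coeff n = 1 := by
          have hm := QQ_monic hs n
          rw [Polynomial.Monic, Polynomial.leadingCoeff, QQ_natDegree hs n] at hm
          exact hm
        rw [heq, h1, if_pos rfl, if_neg (by omega : ¬ n + 1 = n)]
        ring
      · have h1 : (QQ s n).coeff j = 0 := by
          apply Polynomial.coeff_eq_zero_of_natDegree_lt
          rw [QQ_natDegree hs n]; omega
        rw [h1, if_neg (by omega : ¬ j + 1 = n + 1), if_neg (by omega : ¬ j + 1 = n)]
        ring
  omega

lemma pinner_X_QQ (hs : -1 < s) (n : ℕ) (hn : 1 ≤ n) :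
    pinner (jacobiMeasure s) (Polynomial.X * QQ s n) (QQ s n)
      = (cc s n)⁻¹ * (Wv s n (n+1) + (QQ s n).coeff (n-1) * Wv s n n) := by
  rw [pinner_comm]
  set bb := (QQ s n).coeff (n-1)
  have hdec : pinner (jacobiMeasure s) (QQ s n) (Polynomial.X * QQ s n)
      = pinner (jacobiMeasure s) (QQ s n) (Polynomial.X ^ (n+1))
        + bb * pinner (jacobiMeasure s) (QQ s n) (Polynomial.X ^ n)
        + pinner (jacobiMeasure s) (QQ s n) (Polynomial.X * QQ s n - Polynomial.X ^ (n+1)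
            - Polynomial.C bb * Polynomial.X ^ n) := by
    rw [← pinner_Cmul_right hs, ← pinner_add_right hs, ← pinner_add_right hs]
    congr 1
    ring
  rw [hdec, pinner_QQ_lowdeg hs n _ (X_QQ_rem hs n hn), add_zero,
    pinner_QQ_X hs, pinner_QQ_X hs]
  ring

lemma pinner_self_zero (hs : -1 < s) (r : Polynomial ℝ)
    (h : pinner (jacobiMeasure s) r r = 0) : r = 0 := by
  by_contra hr
  have hf : (0:ℝ → ℝ) ≤ fun x => r.eval x * r.eval x := fun x => mul_self_nonneg _
  have hint : Integrable (fun x => r.eval x * r.eval x) (jacobiMeasure s) := by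
    have := integrable_eval hs (r * r)
    simpa [Polynomial.eval_mul] using this
  have hae : (fun x => r.eval x * r.eval x) =ᵐ[jacobiMeasure s] 0 :=
    (integral_eq_zero_iff_of_nonneg hf hint).mp h
  have hA : jacobiMeasure s {x | r.eval x ≠ 0} = 0 := by
    have := Filter.eventuallyEq_iff_all_subsets.mp hae
    have h2 : jacobiMeasure s {x | ¬ (r.eval x * r.eval x = 0)} = 0 := by
      have := hae
      rw [Filter.EventuallyEq, ae_iff] at this
      simpa using this
    have hset : {x : ℝ | ¬ (r.eval x * r.eval x = 0)} = {x | r.eval x ≠ 0} := by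
      ext x; simp [mul_self_eq_zero]
    rwa [hset] at h2
  -- the set where r doesn't vanish inside (0,1]
  set Z := {x : ℝ | r.IsRoot x} with hZ
  have hZfin : Z.Finite := Polynomial.finite_setOf_isRoot hr
  set S := Set.Ioc (0:ℝ) 1 \ Z with hS
  have hSmeas : MeasurableSet S := measurableSet_Ioc.diff hZfin.measurableSet
  have hSsub : S ⊆ {x | r.eval x ≠ 0} := by
    intro x hx
    exact hx.2
  have hS0 : jacobiMeasure s S = 0 :=
    le_antisymm (le_trans (measure_mono hSsub) (le_of_eq hA)) (zero_le)
  have hSIcc : S ⊆ Set.Icc (0:ℝ) 1 := fun x hx => Set.mem_Icc_of_Ioc hx.1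
  rw [jacobiMeasure, withDensity_apply _ hSmeas, Measure.restrict_restrict hSmeas,
    Set.inter_eq_self_of_subset_left hSIcc] at hS0
  have hmeas : Measurable (fun x : ℝ => ENNReal.ofReal (x ^ s)) := by
    have h : Measurable (fun x : ℝ => x ^ s) := by fun_prop
    exact h.ennreal_ofReal
  rw [lintegral_eq_zero_iff hmeas] at hS0
  have hfalse : ∀ᵐ x ∂(volume.restrict S), False := by
    filter_upwards [hS0, ae_restrict_mem hSmeas] with x h1 h2
    have hx0 : 0 < x ^ s := Real.rpow_pos_of_pos h2.1.1 s
    simp only [Pi.zero_apply, ENNReal.ofReal_eq_zero] at h1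
    linarith
  have hvol : volume S = 0 := by
    rw [← Measure.restrict_eq_zero]
    exact ae_eq_bot.mp (Filter.eventually_false_iff_eq_bot.mp hfalse)
  have hvolS : volume S = 1 := by
    rw [hS, measure_diff_null (hZfin.measure_zero volume)]
    simp [Real.volume_Ioc]
  rw [hvolS] at hvol
  exact one_ne_zero hvol

lemma P_ortho_lowdeg (hs : -1 < s) (P : ℕ → Polynomial ℝ)
    (hP : IsMonicOrthogonal (jacobiMeasure s) P) :
    ∀ d n, d < n → ∀ r : Polynomial ℝ, r.natDegree ≤ d →
      pinner (jacobiMeasure s) (P n) r = 0 := by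
  obtain ⟨hmon, hdeg, horth⟩ := hP
  intro d
  induction d with
  | zero =>
    intro n hn r hr
    have hP0 : P 0 = 1 :=
      (Polynomial.Monic.natDegree_eq_zero (hmon 0)).mp (hdeg 0)
    have hrC : r = Polynomial.C (r.coeff 0) := Polynomial.eq_C_of_natDegree_le_zero hr
    rw [hrC, show Polynomial.C (r.coeff 0) = Polynomial.C (r.coeff 0) * P 0 by rw [hP0, mul_one],
      pinner_Cmul_right hs, horth n 0 (by omega), mul_zero]
  | succ d ih =>
    intro n hn r hr
    set r' := r - Polynomial.C (r.coeff (d+1)) * P (d+1) with hr'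
    have hr'deg : r'.natDegree ≤ d := by
      apply Polynomial.natDegree_le_iff_coeff_eq_zero.mpr
      intro N hN
      rw [hr', Polynomial.coeff_sub, Polynomial.coeff_C_mul]
      rcases eq_or_ne N (d+1) with heq | hne
      · have h1 : (P (d+1)).coeff (d+1) = 1 := by
          have hm := hmon (d+1)
          rw [Polynomial.Monic, Polynomial.leadingCoeff, hdeg (d+1)] at hm
          exact hm
        rw [heq, h1, mul_one, sub_self]
      · have h1 : r.coeff N = 0 :=
          Polynomial.coeff_eq_zero_of_natDegree_lt (by omega)
        have h2 : (P (d+1)).coeff N = 0 :=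
          Polynomial.coeff_eq_zero_of_natDegree_lt (by rw [hdeg (d+1)]; omega)
        rw [h1, h2, mul_zero, sub_self]
    have : r = r' + Polynomial.C (r.coeff (d+1)) * P (d+1) := by rw [hr']; ring
    rw [this, pinner_add_right hs, pinner_Cmul_right hs,
      ih n (by omega) r' hr'deg, horth n (d+1) (by omega), zero_add, mul_zero]

lemma P_eq_QQ (hs : -1 < s) (P : ℕ → Polynomial ℝ)
    (hP : IsMonicOrthogonal (jacobiMeasure s) P) (n : ℕ) : P n = QQ s n := by
  rcases Nat.eq_zero_or_pos n with rfl | hn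
  · rw [QQ_zero hs,
      (Polynomial.Monic.natDegree_eq_zero (hP.1 0)).mp (hP.2.1 0)]
  · set D := P n - QQ s n with hD
    have hDdeg : D.natDegree < n := by
      have hle : D.natDegree ≤ n - 1 := by
        apply Polynomial.natDegree_le_iff_coeff_eq_zero.mpr
        intro N hN
        rw [hD, Polynomial.coeff_sub]
        rcases eq_or_ne N n with heq | hne
        · have h1 : (P n).coeff n = 1 := by
            have hm := hP.1 n
            rw [Polynomial.Monic, Polynomial.leadingCoeff, hP.2.1 n] at hm
            exact hm
          have h2 : (QQ s n).coeff n = 1 := by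
            have hm := QQ_monic hs n
            rw [Polynomial.Monic, Polynomial.leadingCoeff, QQ_natDegree hs n] at hm
            exact hm
          rw [heq, h1, h2, sub_self]
        · rw [Polynomial.coeff_eq_zero_of_natDegree_lt (by rw [hP.2.1 n]; omega),
            Polynomial.coeff_eq_zero_of_natDegree_lt (by rw [QQ_natDegree hs n]; omega),
            sub_self]
      omega
    have h1 : pinner (jacobiMeasure s) (P n) D = 0 :=
      P_ortho_lowdeg hs P hP D.natDegree n hDdeg D le_rfl
    have h2 : pinner (jacobiMeasure s) (QQ s n) D = 0 :=
      pinner_QQ_lowdeg hs n D hDdeg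
    have h3 : pinner (jacobiMeasure s) D D = 0 := by
      have hsub := pinner_sub_right hs D (P n) (QQ s n)
      rw [← hD] at hsub
      rw [hsub, pinner_comm _ D (P n), h1, pinner_comm _ D (QQ s n), h2, sub_zero]
    have := pinner_self_zero hs D h3
    rw [hD] at this
    exact sub_eq_zero.mp this

def Gp (c : ℝ) (n : ℕ) : ℝ := ∏ j ∈ range n, (c + (j:ℝ))

lemma Gp_succ_right (c : ℝ) (n : ℕ) : Gp c (n+1) = Gp c n * (c + n) :=
  Finset.prod_range_succ _ n

lemma Gp_succ_left (c : ℝ) (n : ℕ) : Gp c (n+1) = c * Gp (c+1) n := by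
  rw [Gp, Finset.prod_range_succ' (fun j => c + (j:ℝ)) n]
  have h1 : ∏ j ∈ range n, (c + ((j:ℕ)+1:ℕ)) = Gp (c+1) n := by
    apply Finset.prod_congr rfl
    intro j _
    push_cast
    ring
  rw [h1]
  norm_num
  ring

lemma Gp_pos {c : ℝ} (hc : 0 < c) (n : ℕ) : 0 < Gp c n := by
  apply Finset.prod_pos
  intro i _
  have : (0:ℝ) ≤ i := Nat.cast_nonneg i
  linarith

lemma prod_m1 (n : ℕ) : ∏ i ∈ range n, (-1 - (i:ℝ)) = (-1:ℝ)^n * n.factorial := by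
  induction n with
  | zero => simp
  | succ n ih =>
    rw [Finset.prod_range_succ, ih, Nat.factorial_succ]
    push_cast
    ring

lemma prod_m2 (n : ℕ) : ∏ i ∈ range n, (-2 - (i:ℝ)) = (-1:ℝ)^n * (n+1).factorial := by
  induction n with
  | zero => simp
  | succ n ih =>
    rw [Finset.prod_range_succ, ih, Nat.factorial_succ (n+1)]
    push_cast
    ring



lemma cc_eq_Gp (s : ℝ) (n : ℕ) : cc s n = Gp (s+(n:ℝ)+1) n := by
  apply Finset.prod_congr rfl
  intro i _
  ring

lemma key_cancel (a b c d : ℝ) (h : a*a = 1) : (a*b) * (a*c/d) = b*c/d := by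
  rw [show (a*b)*(a*c/d) = (a*a)*(b*c)/d by ring, h, one_mul]

lemma neg_one_sq_pow (n : ℕ) : ((-1:ℝ)^n) * ((-1:ℝ)^n) = 1 := by
  rw [← pow_add, ← two_mul, pow_mul]
  norm_num

lemma Wv_nn (s : ℝ) (n : ℕ) :
    Wv s n n = (n.factorial:ℝ) * (n.factorial:ℝ) / Gp (s+(n:ℝ)+1) (n+1) := by
  rw [Wv]
  have h1 : ∏ i ∈ range n, ((n:ℝ)-n-1-i) = ∏ i ∈ range n, (-1 - (i:ℝ)) := by
    apply Finset.prod_congr rfl; intro i _; ring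
  have h2 : ∏ j ∈ range (n+1), (s+(n:ℝ)+1+j) = Gp (s+(n:ℝ)+1) (n+1) := by
    apply Finset.prod_congr rfl; intro j _; ring
  rw [h1, h2, prod_m1]
  exact key_cancel _ _ _ _ (neg_one_sq_pow n)

lemma Wv_nn1 (s : ℝ) (n : ℕ) :
    Wv s n (n+1) = ((n+1).factorial:ℝ) * (n.factorial:ℝ) / Gp (s+(n:ℝ)+2) (n+1) := by
  rw [Wv]
  have h1 : ∏ i ∈ range n, ((n:ℝ)-((n+1:ℕ):ℝ)-1-i) = ∏ i ∈ range n, (-2 - (i:ℝ)) := by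
    apply Finset.prod_congr rfl; intro i _; push_cast; ring
  have h2 : ∏ j ∈ range (n+1), (s+((n+1:ℕ):ℝ)+1+j) = Gp (s+(n:ℝ)+2) (n+1) := by
    apply Finset.prod_congr rfl; intro j _; push_cast; ring
  rw [h1, h2, prod_m2]
  exact key_cancel _ _ _ _ (neg_one_sq_pow n)

lemma alpha_formula {s : ℝ} (hs : -1 < s) (n : ℕ) (hn : 1 ≤ n) (bb : ℝ)
    (hbb : bb * Gp (s+(n:ℝ)+1) n = -(n:ℝ) * Gp (s+(n:ℝ)) n) :
    ((cc s n)⁻¹ * (Wv s n (n+1) + bb * Wv s n n)) / ((cc s n)⁻¹ * Wv s n n)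
      = (1/2) * (1 + s^2/((s+2*n)*(2+s+2*n))) := by
  have hn1 : (1:ℝ) ≤ n := by exact_mod_cast hn
  have hX1 : 0 < Gp (s+(n:ℝ)+1) n := Gp_pos (by linarith) n
  have hX2 : 0 < Gp (s+(n:ℝ)+1+1) n := Gp_pos (by linarith) n
  have hfac : (0:ℝ) < n.factorial := by exact_mod_cast n.factorial_pos
  have d3 : s+(n:ℝ)+1 ≠ 0 := by linarith
  have d4 : s+2*(n:ℝ) ≠ 0 := by linarith
  have d5 : (2:ℝ)+s+2*n ≠ 0 := by linarith
  have d1 : s+2*(n:ℝ)+1 ≠ 0 := by linarith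
  have d6 : s+(n:ℝ)+1+(n:ℝ) ≠ 0 := by linarith
  have d7 : s+(n:ℝ)+1+1+(n:ℝ) ≠ 0 := by linarith
  have e2 : (s+(n:ℝ)+1) * Gp (s+(n:ℝ)+1+1) n = Gp (s+(n:ℝ)+1) n * (s+2*(n:ℝ)+1) := by
    have u1 := Gp_succ_left (s+(n:ℝ)+1) n
    have u2 := Gp_succ_right (s+(n:ℝ)+1) n
    linear_combination u2 - u1
  have e3 : Gp (s+(n:ℝ)) n * (s+2*(n:ℝ)) = (s+(n:ℝ)) * Gp (s+(n:ℝ)+1) n := by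
    have u1 := Gp_succ_right (s+(n:ℝ)) n
    have u2 := Gp_succ_left (s+(n:ℝ)) n
    linear_combination u2 - u1
  have h6 : (bb * (s+2*(n:ℝ))) * Gp (s+(n:ℝ)+1) n
      = (-(n:ℝ)*(s+(n:ℝ))) * Gp (s+(n:ℝ)+1) n := by
    linear_combination (s+2*(n:ℝ)) * hbb - (n:ℝ) * e3
  have hbbv : bb = -(n:ℝ)*(s+(n:ℝ))/(s+2*(n:ℝ)) := by
    rw [eq_div_iff d4]
    exact mul_right_cancel₀ hX1.ne' h6
  have hg2v : Gp (s+(n:ℝ)+1+1) n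
      = Gp (s+(n:ℝ)+1) n * (s+2*(n:ℝ)+1)/(s+(n:ℝ)+1) := by
    rw [eq_div_iff d3]
    linear_combination e2
  have w0 : Wv s n n = (n.factorial:ℝ) * (n.factorial:ℝ)
      / (Gp (s+(n:ℝ)+1) n * (s+(n:ℝ)+1+n)) := by
    rw [Wv_nn, Gp_succ_right]
  have w1 : Wv s n (n+1) = ((n+1).factorial:ℝ) * (n.factorial:ℝ)
      / (Gp (s+(n:ℝ)+1+1) n * (s+(n:ℝ)+1+1+n)) := by
    rw [Wv_nn1, show s+(n:ℝ)+2 = s+(n:ℝ)+1+1 by ring, Gp_succ_right]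
  have hfs : ((n+1).factorial:ℝ) = ((n:ℝ)+1) * (n.factorial:ℝ) := by
    rw [Nat.factorial_succ]; push_cast; ring
  rw [cc_eq_Gp, w0, w1, hfs, hbbv, hg2v]
  have d4' : s+(n:ℝ)*2 ≠ 0 := by linarith
  have d5' : 2+s+(n:ℝ)*2 ≠ 0 := by linarith
  have d1' : s+(n:ℝ)*2+1 ≠ 0 := by linarith
  field_simp
  ring

lemma beta_formula {s : ℝ} (hs : -1 < s) (n : ℕ) :
    ((cc s (n+1))⁻¹ * Wv s (n+1) (n+1)) / ((cc s n)⁻¹ * Wv s n n)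
      = ((1+(n:ℝ))*(1+s+n)/((s+2+2*n)*(3+s+2*n)))^2 * ((3+s+2*n)/(1+s+2*n)) := by
  have hn0 : (0:ℝ) ≤ (n:ℝ) := Nat.cast_nonneg n
  have hX1 : 0 < Gp (s+(n:ℝ)+1) n := Gp_pos (by linarith) n
  have hX2 : 0 < Gp (s+(n:ℝ)+1+1) n := Gp_pos (by linarith) n
  have hfac : (0:ℝ) < n.factorial := by exact_mod_cast n.factorial_pos
  have hfac1 : (0:ℝ) < (n+1).factorial := by exact_mod_cast (n+1).factorial_pos
  have d1 : s+2*(n:ℝ)+1 ≠ 0 := by linarith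
  have d2 : s+2*(n:ℝ)+2 ≠ 0 := by linarith
  have d3 : s+(n:ℝ)+1 ≠ 0 := by linarith
  have d6 : s+(n:ℝ)+1+(n:ℝ) ≠ 0 := by linarith
  have d7 : s+(n:ℝ)+1+1+(n:ℝ) ≠ 0 := by linarith
  have d8 : s+(n:ℝ)+1+1+((n:ℝ)+1) ≠ 0 := by linarith
  have d9 : (s+2+2*(n:ℝ)) ≠ 0 := by linarith
  have d10 : (3+s+2*(n:ℝ)) ≠ 0 := by linarith
  have d11 : (1+s+2*(n:ℝ)) ≠ 0 := by linarith
  have e2 : (s+(n:ℝ)+1) * Gp (s+(n:ℝ)+1+1) n = Gp (s+(n:ℝ)+1) n * (s+2*(n:ℝ)+1) := by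
    have u1 := Gp_succ_left (s+(n:ℝ)+1) n
    have u2 := Gp_succ_right (s+(n:ℝ)+1) n
    linear_combination u2 - u1
  have hg1v : Gp (s+(n:ℝ)+1) n
      = (s+(n:ℝ)+1) * Gp (s+(n:ℝ)+1+1) n / (s+2*(n:ℝ)+1) := by
    rw [eq_div_iff d1]
    linear_combination -e2
  have hcast : s+((n+1:ℕ):ℝ)+1 = s+(n:ℝ)+1+1 := by push_cast; ring
  have hccn1 : cc s (n+1) = Gp (s+(n:ℝ)+1+1) n * (s+(n:ℝ)+1+1+n) := by
    rw [cc_eq_Gp, hcast, Gp_succ_right]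
  have hwn1 : Wv s (n+1) (n+1) = ((n+1).factorial:ℝ) * ((n+1).factorial:ℝ)
      / ((Gp (s+(n:ℝ)+1+1) n * (s+(n:ℝ)+1+1+n)) * (s+(n:ℝ)+1+1+((n:ℝ)+1))) := by
    rw [Wv_nn s (n+1), hcast, Gp_succ_right, Gp_succ_right]
    push_cast
    ring
  have w0 : Wv s n n = (n.factorial:ℝ) * (n.factorial:ℝ)
      / (Gp (s+(n:ℝ)+1) n * (s+(n:ℝ)+1+n)) := by
    rw [Wv_nn, Gp_succ_right]
  have hfs : ((n+1).factorial:ℝ) = ((n:ℝ)+1) * (n.factorial:ℝ) := by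
    rw [Nat.factorial_succ]; push_cast; ring
  rw [hccn1, hwn1, w0, cc_eq_Gp, hfs, hg1v]
  have d1' : s+(n:ℝ)*2+1 ≠ 0 := by linarith
  have d9' : s+2+(n:ℝ)*2 ≠ 0 := by linarith
  have d10' : 3+s+(n:ℝ)*2 ≠ 0 := by linarith
  have d11' : 1+s+(n:ℝ)*2 ≠ 0 := by linarith
  field_simp
  ring

section FinalAssembly

variable {s : ℝ}

lemma QQ_coeff_sub_one (hs : -1 < s) (n : ℕ) (hn : 1 ≤ n) :
    (QQ s n).coeff (n-1) * Gp (s+(n:ℝ)+1) n = -(n:ℝ) * Gp (s+(n:ℝ)) n := by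
  have hq : (QQ s n).coeff (n-1) = (cc s n)⁻¹ * (qraw s n).coeff (n-1) := by
    rw [QQ, Polynomial.coeff_C_mul]
  have hcoeff : (qraw s n).coeff (n-1)
      = (-1:ℝ)^(n+(n-1)) * (n.choose (n-1) : ℝ) * ∏ i ∈ range n, (s+((n-1:ℕ):ℝ)+1+i) :=
    qraw_coeff n (n-1) (by omega)
  have hsign : (-1:ℝ)^(n+(n-1)) = -1 := by
    rw [show n+(n-1) = 2*(n-1)+1 by omega, pow_succ, pow_mul]
    norm_num
  have hch : (n.choose (n-1) : ℝ) = (n:ℝ) := by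
    rw [Nat.choose_symm hn, Nat.choose_one_right]
  have hprod : ∏ i ∈ range n, (s+((n-1:ℕ):ℝ)+1+i) = Gp (s+(n:ℝ)) n := by
    apply Finset.prod_congr rfl
    intro i _
    rw [Nat.cast_sub hn]
    push_cast
    ring
  rw [hq, hcoeff, hsign, hch, hprod, cc_eq_Gp]
  have hpos : Gp (s+(n:ℝ)+1) n ≠ 0 := by
    have hn0 : (0:ℝ) ≤ (n:ℝ) := Nat.cast_nonneg n
    exact (Gp_pos (by linarith) n).ne'
  field_simp

lemma cc_zero : cc s 0 = 1 := by simp [cc]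

lemma Wv_zero_m (m : ℕ) : Wv s 0 m = 1 / (s+(m:ℝ)+1) := by
  simp [Wv]

theorem jacobi_chain_coefficients'
    (hs : -1 < s)
    (P : ℕ → Polynomial ℝ) (hP : IsMonicOrthogonal (jacobiMeasure s) P) :
    (∀ n : ℕ, pinner (jacobiMeasure s) (X * P n) (P n) / pinner (jacobiMeasure s) (P n) (P n) =
        (1 / 2) * (1 + s ^ 2 / ((s + 2 * n) * (2 + s + 2 * n)))) ∧
      ∀ n : ℕ, Real.sqrt (pinner (jacobiMeasure s) (P (n+1)) (P (n+1))
          / pinner (jacobiMeasure s) (P n) (P n)) =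
        ((1 + n) * (1 + s + n) / ((s + 2 + 2 * n) * (3 + s + 2 * n))) *
          Real.sqrt ((3 + s + 2 * n) / (1 + s + 2 * n)) := by
  have hPQ : ∀ n, P n = QQ s n := P_eq_QQ hs P hP
  constructor
  · intro n
    rw [hPQ n]
    rcases Nat.eq_zero_or_pos n with rfl | hn
    · rw [pinner_QQ_self hs 0]
      have h1 : pinner (jacobiMeasure s) (X * QQ s 0) (QQ s 0)
          = (cc s 0)⁻¹ * Wv s 0 1 := by
        rw [pinner_comm, QQ_zero hs, mul_one, ← pow_one (X : Polynomial ℝ),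
          ← QQ_zero hs, pinner_QQ_X hs]
      rw [h1, cc_zero, Wv_zero_m, Wv_zero_m]
      have hs1 : s + 1 ≠ 0 := by linarith
      have hs2 : s + 2 ≠ 0 := by linarith
      rcases eq_or_ne s 0 with rfl | hsne
      · norm_num
      · push_cast
        rw [show s+(0:ℝ)+1 = s+1 by ring, show s+(1:ℝ)+1 = s+2 by ring,
          show s+2*(0:ℝ) = s by ring, show 2+s+2*(0:ℝ) = 2+s by ring]
        have hs4 : s*(2+s) ≠ 0 := mul_ne_zero hsne (by linarith)
        have hs5 : 2+s ≠ 0 := by linarith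
        field_simp
        ring
    · rw [pinner_X_QQ hs n hn, pinner_QQ_self hs n]
      exact alpha_formula hs n hn _ (QQ_coeff_sub_one hs n hn)
  · intro n
    rw [hPQ n, hPQ (n+1), pinner_QQ_self hs n, pinner_QQ_self hs (n+1),
      beta_formula hs n]
    have hn0 : (0:ℝ) ≤ (n:ℝ) := Nat.cast_nonneg n
    have hR : 0 ≤ (1+(n:ℝ))*(1+s+n)/((s+2+2*n)*(3+s+2*n)) := by
      apply div_nonneg
      · nlinarith
      · nlinarith
    rw [Real.sqrt_mul (sq_nonneg _) _, Real.sqrt_sq hR]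
end FinalAssembly

/-- For the measure `dμ(x) = x^s dx` on `[0,1]` (`s > -1`), the monic
recurrence coefficients are `α_n = (1/2)(1 + s²/((s + 2n)(2 + s + 2n)))` and
`√β_{n+1} = ((1+n)(1+s+n)/((s + 2 + 2n)(3 + s + 2n))) √((3 + s + 2n)/(1 + s + 2n))`.
(These give the chain frequencies `ω_n = ω_c α_n` and hoppings `t_n = ω_c √β_{n+1}` of the
spin-boson model with power-law spectral density and hard cutoff.) -/
theorem jacobi_chain_coefficients
    (s : ℝ) (hs : -1 < s)
    (P : ℕ → Polynomial ℝ) (hP : IsMonicOrthogonal (jacobiMeasure s) P) :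
    (∀ n : ℕ, alphaCoeff (jacobiMeasure s) P n =
        (1 / 2) * (1 + s ^ 2 / ((s + 2 * n) * (2 + s + 2 * n)))) ∧
      ∀ n : ℕ, Real.sqrt (betaCoeff (jacobiMeasure s) P (n + 1)) =
        ((1 + n) * (1 + s + n) / ((s + 2 + 2 * n) * (3 + s + 2 * n))) *
          Real.sqrt ((3 + s + 2 * n) / (1 + s + 2 * n)) := by
  have h := jacobi_chain_coefficients' hs P hP
  constructor
  · intro n
    rw [alphaCoeff]
    exact h.1 n
  · intro n
    rw [betaCoeff, Nat.add_sub_cancel]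
    exact h.2 n
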